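/- For each σ ∈ S_4, conjugation by the permutation matrix K_σ permutes the set {L_α, L_β, L_γ} of Kimura 3ST generators; i.e. the Kimura 3ST model has S_4 symmetry. -/

import Mathlib

open Matrix

/-- Elementary rate matrices `L i j = E i j - E j j`. -/
def Lmat (i j : Fin 4) : Matrix (Fin 4) (Fin 4) ℂ :=
  Matrix.single i j 1 - Matrix.single j j 1

noncomputable def Lα : Matrix (Fin 4) (Fin 4) ℂ :=
  Lmat 0 1 + Lmat 1 0 + Lmat 2 3 + Lmat 3 2

noncomputable def Lβ : Matrix (Fin 4) (Fin 4) ℂ :=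
  Lmat 0 2 + Lmat 2 0 + Lmat 1 3 + Lmat 3 1

noncomputable def Lγ : Matrix (Fin 4) (Fin 4) ℂ :=
  Lmat 0 3 + Lmat 3 0 + Lmat 1 2 + Lmat 2 1

/-- The permutation matrix of `σ`, acting on the standard basis by `K σ *ᵥ e i = e (σ i)`. -/
def Kmat (σ : Equiv.Perm (Fin 4)) : Matrix (Fin 4) (Fin 4) ℂ :=
  Matrix.of fun i j => if i = σ j then 1 else 0

lemma Kmul (σ τ : Equiv.Perm (Fin 4)) : Kmat σ * Kmat τ = Kmat (σ * τ) := by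
  ext a b
  simp [Kmat, mul_apply, ite_and, Finset.sum_ite_eq']
  rfl

lemma Kone : Kmat 1 = 1 := by
  ext a b
  simp [Kmat, Matrix.one_apply]
  rfl

lemma Kinv (σ : Equiv.Perm (Fin 4)) : (Kmat σ)⁻¹ = Kmat σ⁻¹ := by
  apply Matrix.inv_eq_right_inv
  rw [Kmul, mul_inv_cancel, Kone]

lemma KE (σ : Equiv.Perm (Fin 4)) (i j : Fin 4) :
    Kmat σ * Matrix.single i j 1 * (Kmat σ)⁻¹ = Matrix.single (σ i) (σ j) 1 := by
  rw [Kinv]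
  ext a b
  simp [Kmat, mul_apply, Matrix.single, ite_and, Finset.sum_ite_eq', Equiv.eq_symm_apply]
  split_ifs with h1 h2 <;> simp_all [Equiv.eq_symm_apply, eq_comm]
  all_goals (rw [Finset.sum_eq_zero]; intro x _; split_ifs <;> simp_all)

lemma Kconj_Lmat (σ : Equiv.Perm (Fin 4)) (i j : Fin 4) :
    Kmat σ * Lmat i j * (Kmat σ)⁻¹ = Lmat (σ i) (σ j) := by
  unfold Lmat
  rw [Matrix.mul_sub, Matrix.sub_mul, KE, KE]

noncomputable def Lsum (a b c d : Fin 4) : Matrix (Fin 4) (Fin 4) ℂ :=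
  Lmat a b + Lmat b a + Lmat c d + Lmat d c

lemma finmk0 : ((⟨0, by omega⟩:Fin 4)) = 0 := rfl
lemma finmk1 : ((⟨1, by omega⟩:Fin 4)) = 1 := rfl
lemma finmk2 : ((⟨2, by omega⟩:Fin 4)) = 2 := rfl
lemma finmk3 : ((⟨3, by omega⟩:Fin 4)) = 3 := rfl

set_option maxHeartbeats 1000000 in
lemma Lsum_mem (a b c d : Fin 4) (hab : ¬ a = b) (hac : ¬ a = c) (had : ¬ a = d)
    (hbc : ¬ b = c) (hbd : ¬ b = d) (hcd : ¬ c = d) :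
    Lsum a b c d = Lα ∨ Lsum a b c d = Lβ ∨ Lsum a b c d = Lγ := by
  fin_cases a <;> fin_cases b <;> fin_cases c <;> fin_cases d <;>
  first
    | (exact absurd rfl (by assumption))
    | (refine Or.inl ?_; simp only [finmk0, finmk1, finmk2, finmk3]; unfold Lsum Lα; abel; done)
    | (refine Or.inr (Or.inl ?_); simp only [finmk0, finmk1, finmk2, finmk3]
       unfold Lsum Lβ; abel; done)
    | (refine Or.inr (Or.inr ?_); simp only [finmk0, finmk1, finmk2, finmk3]
       unfold Lsum Lγ; abel; done)

lemma Kconj_Lsum (σ : Equiv.Perm (Fin 4)) (a b c d : Fin 4) :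
    Kmat σ * Lsum a b c d * (Kmat σ)⁻¹ = Lsum (σ a) (σ b) (σ c) (σ d) := by
  unfold Lsum
  simp only [Matrix.mul_add, Matrix.add_mul, Kconj_Lmat]

lemma conj_mem (σ : Equiv.Perm (Fin 4)) (M : Matrix (Fin 4) (Fin 4) ℂ)
    (hM : M ∈ ({Lα, Lβ, Lγ} : Set (Matrix (Fin 4) (Fin 4) ℂ))) :
    Kmat σ * M * (Kmat σ)⁻¹ ∈ ({Lα, Lβ, Lγ} : Set (Matrix (Fin 4) (Fin 4) ℂ)) := by
  have hd : ∀ i j : Fin 4, i ≠ j → ¬ σ i = σ j := fun i j h h' => h (σ.injective h')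
  rcases hM with rfl | rfl | rfl
  · have hc : Kmat σ * Lα * (Kmat σ)⁻¹ = Lsum (σ 0) (σ 1) (σ 2) (σ 3) := by
      rw [show Lα = Lsum 0 1 2 3 from by unfold Lα Lsum; abel, Kconj_Lsum]
    rw [hc]
    rcases Lsum_mem (σ 0) (σ 1) (σ 2) (σ 3) (hd _ _ (by decide)) (hd _ _ (by decide))
      (hd _ _ (by decide)) (hd _ _ (by decide)) (hd _ _ (by decide)) (hd _ _ (by decide)) with
      h | h | h <;> simp [h]
  · have hc : Kmat σ * Lβ * (Kmat σ)⁻¹ = Lsum (σ 0) (σ 2) (σ 1) (σ 3) := by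
      rw [show Lβ = Lsum 0 2 1 3 from by unfold Lβ Lsum; abel, Kconj_Lsum]
    rw [hc]
    rcases Lsum_mem (σ 0) (σ 2) (σ 1) (σ 3) (hd _ _ (by decide)) (hd _ _ (by decide))
      (hd _ _ (by decide)) (hd _ _ (by decide)) (hd _ _ (by decide)) (hd _ _ (by decide)) with
      h | h | h <;> simp [h]
  · have hc : Kmat σ * Lγ * (Kmat σ)⁻¹ = Lsum (σ 0) (σ 3) (σ 1) (σ 2) := by
      rw [show Lγ = Lsum 0 3 1 2 from by unfold Lγ Lsum; abel, Kconj_Lsum]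
    rw [hc]
    rcases Lsum_mem (σ 0) (σ 3) (σ 1) (σ 2) (hd _ _ (by decide)) (hd _ _ (by decide))
      (hd _ _ (by decide)) (hd _ _ (by decide)) (hd _ _ (by decide)) (hd _ _ (by decide)) with
      h | h | h <;> simp [h]

theorem kimura3ST_has_S4_symmetry (σ : Equiv.Perm (Fin 4)) :
    (fun M => Kmat σ * M * (Kmat σ)⁻¹) '' {Lα, Lβ, Lγ} = {Lα, Lβ, Lγ} := by
  apply Set.Subset.antisymm
  · rintro _ ⟨M, hM, rfl⟩
    exact conj_mem σ M hM
  · intro y hy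
    refine ⟨Kmat σ⁻¹ * y * (Kmat σ⁻¹)⁻¹, conj_mem σ⁻¹ y hy, ?_⟩
    simp only [Kinv, inv_inv]
    calc Kmat σ * (Kmat σ⁻¹ * y * Kmat σ) * Kmat σ⁻¹
        = (Kmat σ * Kmat σ⁻¹) * y * (Kmat σ * Kmat σ⁻¹) := by
          simp only [mul_assoc]
      _ = y := by rw [Kmul, mul_inv_cancel, Kone, one_mul, mul_one]
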